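/- Let T = S_1|S_2|...|S_{k+1} be an ordered set partition of [d+1] with structure type (t_0=0, t_1, ..., t_{k+1}=d+1) where t_i = |S_1| + ... + |S_i|. Suppose T lies on the maximal chain ch(π,τ), i.e., S_i = {π^{-1}(j) : t_{i-1}+1 ≤ j ≤ t_i} for all i and the labels on the remaining bars are {τ(t_1),...,τ(t_k)} = {d−k+1,...,d}. Then ⟨e_T, v_{π,τ}⟩ = M(∑_{i=1}^{k+1} i ∑_{j=t_{i-1}+1}^{t_i} α_j) + N ∑_{j=d−k+1}^{d} β_j, where v_{π,τ} is the nested permutohedron vertex with parameters (α,β;M,N). -/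

import Mathlib

/-- The standard basis vector `e_j` of `ℝ^{d+1}`. -/
noncomputable def stdVec (d : ℕ) (j : Fin (d+1)) : Fin (d+1) → ℝ :=
  fun x => if x = j then 1 else 0

/-- The candidate vertex `v_{π,τ}` of the nested permutohedron `Perm(α,β;M,N)`. -/
noncomputable def nestedVertex (d : ℕ) (α : Fin (d+1) → ℝ) (β : Fin d → ℝ) (M N : ℝ)
    (π : Equiv.Perm (Fin (d+1))) (τ : Equiv.Perm (Fin d)) : Fin (d+1) → ℝ :=
  M • (∑ i, α i • stdVec d (π⁻¹ i)) +
    N • (∑ j : Fin d, β j •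
      (stdVec d (π⁻¹ (Fin.succ (τ⁻¹ j))) - stdVec d (π⁻¹ (Fin.castSucc (τ⁻¹ j)))))

/-- Extend a finite sequence to `ℕ` by `0`. -/
noncomputable def finExt {n : ℕ} (f : Fin n → ℝ) (p : ℕ) : ℝ :=
  if h : p < n then f ⟨p, h⟩ else 0

lemma aux_sum (g : ℕ → ℝ) :
    ∀ (t : ℕ → ℕ) (n : ℕ), (∀ i j, i ≤ j → j ≤ n → t i ≤ t j) →
    ∑ i ∈ Finset.range n, ∑ p ∈ Finset.Ico (t i) (t n), g p
      = ∑ i ∈ Finset.range n, ((i:ℝ)+1) * ∑ p ∈ Finset.Ico (t i) (t (i+1)), g p := by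
  intro t n
  induction n with
  | zero => simp
  | succ n ih =>
    intro hmono
    have h1 : ∀ i ∈ Finset.range (n+1),
        ∑ p ∈ Finset.Ico (t i) (t (n+1)), g p
          = (∑ p ∈ Finset.Ico (t i) (t n), g p) + ∑ p ∈ Finset.Ico (t n) (t (n+1)), g p := by
      intro i hi
      rw [Finset.mem_range] at hi
      exact (Finset.sum_Ico_consecutive g
        (hmono i n (Nat.lt_succ_iff.mp hi) n.le_succ)
        (hmono n (n+1) n.le_succ le_rfl)).symm
    rw [Finset.sum_congr rfl h1, Finset.sum_add_distrib, Finset.sum_const,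
      Finset.card_range, Finset.sum_range_succ, Finset.sum_range_succ (fun i =>
        ((i:ℝ)+1) * ∑ p ∈ Finset.Ico (t i) (t (i+1)), g p)]
    rw [Finset.Ico_self, Finset.sum_empty, add_zero,
      ih (fun i j hij hj => hmono i j hij (hj.trans n.le_succ))]
    ring

/-- Theorem `thm:facetdes` (key computation): if `T = S₁|⋯|S_{k+1}` has (0-indexed) structure
type `(t₀=0, t₁, …, t_{k+1}=d+1)`, its blocks are the segments
`Sᵢ = {π⁻¹(p) : t_{i-1} ≤ p < t_i}` of `π` (so `e_T(x) = #{i ≤ k : t i ≤ π(x)}`, the 1-based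
block index of `x`), and the bars of `T` carry the top `k` labels under `τ`, then
`⟨e_T, v_{π,τ}⟩ = M ∑_{i=1}^{k+1} i ∑_{j=t_{i-1}+1}^{t_i} α_j + N ∑_{j=d-k+1}^{d} β_j`. -/
theorem eT_inner_nestedVertex (d k : ℕ) (hk : k ≤ d)
    (α : Fin (d+1) → ℝ) (β : Fin d → ℝ) (M N : ℝ)
    (hα : StrictMono α) (hβ : StrictMono β) (hM : 0 < M) (hN : 0 < N)
    (π : Equiv.Perm (Fin (d+1))) (τ : Equiv.Perm (Fin d))
    (t : ℕ → ℕ) (ht0 : t 0 = 0) (htlast : t (k+1) = d+1)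
    (htmono : ∀ i j, i < j → j ≤ k + 1 → t i < t j)
    (hlabel : ∀ b : Fin d, (∃ i, 1 ≤ i ∧ i ≤ k ∧ t i = (b : ℕ) + 1) →
      d - k ≤ (τ b : ℕ)) :
    (∑ x : Fin (d+1),
        ((((Finset.range (k+1)).filter fun i => t i ≤ (π x : ℕ)).card : ℝ)
          * nestedVertex d α β M N π τ x))
      = M * (∑ i ∈ Finset.range (k+1),
            ((i : ℝ) + 1) * ∑ p ∈ Finset.Ico (t i) (t (i+1)), finExt α p)
        + N * ∑ j ∈ Finset.Ico (d - k) d, finExt β j := by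
  classical
  set c : ℕ → ℝ := fun p => (((Finset.range (k+1)).filter fun i => t i ≤ p).card : ℝ) with hc
  -- pointwise value of the vertex
  have hv : ∀ x : Fin (d+1), nestedVertex d α β M N π τ x
      = M * α (π x) + N * ∑ b : Fin d, β (τ b) *
          ((if π x = Fin.succ b then (1:ℝ) else 0)
            - (if π x = Fin.castSucc b then (1:ℝ) else 0)) := by
    intro x
    rw [nestedVertex]
    simp only [Pi.add_apply, Pi.smul_apply, Finset.sum_apply, Pi.sub_apply, smul_eq_mul,
      stdVec, Equiv.Perm.eq_inv_iff_eq, mul_ite, mul_one, mul_zero]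
    congr 1
    · rw [Finset.sum_ite_eq Finset.univ (π x) α, if_pos (Finset.mem_univ _)]
    · rw [← Equiv.sum_comp τ (fun j => β j *
        ((if π x = Fin.succ (τ⁻¹ j) then (1:ℝ) else 0)
          - (if π x = Fin.castSucc (τ⁻¹ j) then (1:ℝ) else 0)))]
      simp [mul_sub, mul_ite]
  -- injectivity of t on range (k+2)
  have hinj : ∀ i j, i < k+2 → j < k+2 → t i = t j → i = j := by
    intro i j hi hj hij
    rcases lt_trichotomy i j with h | h | h
    · exact absurd hij (htmono i j h (Nat.lt_succ_iff.mp hj)).ne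
    · exact h
    · exact absurd hij.symm (htmono j i h (Nat.lt_succ_iff.mp hi)).ne
  -- the bar set
  set B : Finset (Fin d) :=
    Finset.univ.filter (fun b => ∃ i ∈ Finset.range (k+1), t i = (b:ℕ)+1) with hB
  have hdiff : ∀ b : Fin d, c ((b:ℕ)+1) - c (b:ℕ) = if b ∈ B then 1 else 0 := by
    intro b
    have hsplit : Finset.filter (fun i => t i ≤ (b:ℕ)+1) (Finset.range (k+1))
        = Finset.filter (fun i => t i ≤ (b:ℕ)) (Finset.range (k+1))
          ∪ Finset.filter (fun i => t i = (b:ℕ)+1) (Finset.range (k+1)) := by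
      rw [← Finset.filter_or]
      exact Finset.filter_congr fun i _ => by rw [Nat.le_add_one_iff]
    have hdisj : Disjoint (Finset.filter (fun i => t i ≤ (b:ℕ)) (Finset.range (k+1)))
        (Finset.filter (fun i => t i = (b:ℕ)+1) (Finset.range (k+1))) := by
      rw [Finset.disjoint_left]
      intro a ha hb'
      rw [Finset.mem_filter] at ha hb'
      omega
    have hcard1 : (Finset.filter (fun i => t i = (b:ℕ)+1) (Finset.range (k+1))).card
        = if b ∈ B then 1 else 0 := by
      split_ifs with hb
      · simp only [hB, Finset.mem_filter] at hb
        obtain ⟨-, i0, hi0, hti0⟩ := hb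
        rw [Finset.card_eq_one]
        refine ⟨i0, ?_⟩
        ext i
        simp only [Finset.mem_filter, Finset.mem_range, Finset.mem_singleton]
        constructor
        · rintro ⟨hi, hti⟩
          exact hinj i i0 (by omega) (by rw [Finset.mem_range] at hi0; omega)
            (by rw [hti, hti0])
        · rintro rfl
          exact ⟨Finset.mem_range.mp hi0, hti0⟩
      · rw [Finset.card_eq_zero, Finset.filter_eq_empty_iff]
        intro i hi hti
        refine hb ?_
        simp only [hB, Finset.mem_filter]
        exact ⟨Finset.mem_univ _, i, hi, hti⟩
    rw [hc]
    simp only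
    rw [hsplit, Finset.card_union_of_disjoint hdisj, hcard1]
    push_cast
    split_ifs <;> ring
  -- cardinality of the bar set
  have hBcard : k ≤ B.card := by
    rcases Nat.eq_zero_or_pos k with rfl | hkpos
    · exact Nat.zero_le _
    have hd : 0 < d := lt_of_lt_of_le hkpos hk
    have hbd : ∀ i, 1 ≤ i → i ≤ k → 1 ≤ t i ∧ t i ≤ d := by
      intro i h1 h2
      have ha := htmono 0 i (by omega) (by omega)
      have hb' := htmono i (k+1) (by omega) le_rfl
      omega
    have := Finset.card_le_card_of_injOn
      (f := fun i : ℕ => (⟨(t i - 1) % d, Nat.mod_lt _ hd⟩ : Fin d))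
      (s := Finset.Icc 1 k) (t := B) ?_ ?_
    · simpa using this
    · intro i hi
      rw [Finset.mem_coe, Finset.mem_Icc] at hi
      obtain ⟨h1, h2⟩ := hbd i hi.1 hi.2
      simp only [hB, Finset.mem_coe, Finset.mem_filter]
      refine ⟨Finset.mem_univ _, i, Finset.mem_range.mpr (by omega), ?_⟩
      simp only [Nat.mod_eq_of_lt (by omega : t i - 1 < d)]
      omega
    · intro i hi j hj hij
      rw [Finset.mem_coe, Finset.mem_Icc] at hi hj
      obtain ⟨h1i, h2i⟩ := hbd i hi.1 hi.2
      obtain ⟨h1j, h2j⟩ := hbd j hj.1 hj.2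
      have : (t i - 1) % d = (t j - 1) % d := congrArg Fin.val hij
      rw [Nat.mod_eq_of_lt (by omega : t i - 1 < d),
        Nat.mod_eq_of_lt (by omega : t j - 1 < d)] at this
      exact hinj i j (by omega) (by omega) (by omega)
  -- the top-label set
  set J : Finset (Fin d) := Finset.univ.filter (fun j : Fin d => d - k ≤ (j:ℕ)) with hJ
  have hJcard : J.card = k := by
    have hlt : ∀ m ∈ Finset.Ico (d-k) d, m < d := fun m hm => (Finset.mem_Ico.mp hm).2
    have : J = Finset.attachFin (Finset.Ico (d-k) d) hlt := by
      ext j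
      simp [hJ, Finset.mem_attachFin, Finset.mem_Ico, j.isLt]
    rw [this, Finset.card_attachFin, Nat.card_Ico, Nat.sub_sub_self hk]
  have hsub : B.image τ ⊆ J := by
    intro j hj
    rw [Finset.mem_image] at hj
    obtain ⟨b, hb, rfl⟩ := hj
    simp only [hB, Finset.mem_filter] at hb
    obtain ⟨-, i, hi, hti⟩ := hb
    rw [Finset.mem_range] at hi
    have h1 : 1 ≤ i := by
      rcases Nat.eq_zero_or_pos i with rfl | h; · omega
      · exact h
    rw [hJ, Finset.mem_filter]
    exact ⟨Finset.mem_univ _, hlabel b ⟨i, h1, by omega, hti⟩⟩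
  have himage : B.image τ = J := by
    refine Finset.eq_of_subset_of_card_le hsub ?_
    rw [Finset.card_image_of_injective _ τ.injective, hJcard]
    exact hBcard
  -- β-part identity
  have hβsum : ∑ b ∈ B, β (τ b) = ∑ j ∈ Finset.Ico (d - k) d, finExt β j := by
    have h1 : ∑ b ∈ B, β (τ b) = ∑ j ∈ J, β j := by
      rw [← himage, Finset.sum_image (fun a _ b _ h => τ.injective h)]
    have h2 : ∑ j ∈ J, β j = ∑ j ∈ Finset.range d,
        (if d - k ≤ j then finExt β j else 0) := by
      rw [hJ, Finset.sum_filter,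
        ← Fin.sum_univ_eq_sum_range (fun j => if d - k ≤ j then finExt β j else 0)]
      exact Finset.sum_congr rfl fun j _ => by simp [finExt, j.isLt]
    have h3 : Finset.filter (fun j => d - k ≤ j) (Finset.range d)
        = Finset.Ico (d - k) d := by
      ext m; simp [Finset.mem_Ico, and_comm]
    rw [h1, h2, ← Finset.sum_filter, h3]
  -- α-part identity
  have hαsum : ∑ p : Fin (d+1), c (p:ℕ) * α p
      = ∑ i ∈ Finset.range (k+1), ((i:ℝ)+1) * ∑ p ∈ Finset.Ico (t i) (t (i+1)), finExt α p := by
    have h0 : ∑ p : Fin (d+1), c (p:ℕ) * α p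
        = ∑ p ∈ Finset.range (d+1), c p * finExt α p := by
      rw [← Fin.sum_univ_eq_sum_range (fun p => c p * finExt α p)]
      exact Finset.sum_congr rfl fun p _ => by simp [finExt, p.isLt]
    have h1 : ∀ p, c p * finExt α p
        = ∑ i ∈ Finset.range (k+1), (if t i ≤ p then finExt α p else 0) := by
      intro p
      rw [hc]
      simp only
      rw [Finset.card_filter]
      push_cast
      rw [Finset.sum_mul]
      exact Finset.sum_congr rfl fun i _ => by split_ifs <;> simp
    have h2 : ∀ i, Finset.filter (fun p => t i ≤ p) (Finset.range (d+1))
        = Finset.Ico (t i) (t (k+1)) := by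
      intro i
      rw [htlast]
      ext m; simp [Finset.mem_Ico, and_comm]
    rw [h0, Finset.sum_congr rfl fun p _ => h1 p, Finset.sum_comm]
    rw [Finset.sum_congr rfl fun i _ => (Finset.sum_filter _ _).symm]
    rw [Finset.sum_congr rfl fun i (_ : i ∈ Finset.range (k+1)) => by rw [h2 i]]
    exact aux_sum (finExt α) t (k+1)
      (fun i j hij hj => hij.lt_or_eq.elim (fun h => (htmono i j h hj).le)
        (fun h => h ▸ le_rfl))
  -- assemble
  have hre : (∑ x : Fin (d+1),
        ((((Finset.range (k+1)).filter fun i => t i ≤ (π x : ℕ)).card : ℝ)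
          * nestedVertex d α β M N π τ x))
      = ∑ p : Fin (d+1), c (p:ℕ) * (M * α p + N * ∑ b : Fin d, β (τ b) *
          ((if p = Fin.succ b then (1:ℝ) else 0)
            - (if p = Fin.castSucc b then (1:ℝ) else 0))) := by
    rw [← Equiv.sum_comp π (fun p : Fin (d+1) => c (p:ℕ) * (M * α p
        + N * ∑ b : Fin d, β (τ b) *
          ((if p = Fin.succ b then (1:ℝ) else 0)
            - (if p = Fin.castSucc b then (1:ℝ) else 0))))]
    exact Finset.sum_congr rfl fun x _ => by rw [← hv x]
  rw [hre]
  have hsplit2 : ∑ p : Fin (d+1), c (p:ℕ) * (M * α p + N * ∑ b : Fin d, β (τ b) *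
          ((if p = Fin.succ b then (1:ℝ) else 0)
            - (if p = Fin.castSucc b then (1:ℝ) else 0)))
      = M * (∑ p : Fin (d+1), c (p:ℕ) * α p)
        + N * ∑ b : Fin d, β (τ b) * (c ((b:ℕ)+1) - c (b:ℕ)) := by
    have hswap : ∑ p : Fin (d+1), c (p:ℕ) * ∑ b : Fin d, β (τ b) *
          ((if p = Fin.succ b then (1:ℝ) else 0)
            - (if p = Fin.castSucc b then (1:ℝ) else 0))
        = ∑ b : Fin d, β (τ b) * (c ((b:ℕ)+1) - c (b:ℕ)) := by
      rw [Finset.sum_congr rfl fun p (_ : p ∈ Finset.univ) => Finset.mul_sum _ _ _,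
        Finset.sum_comm]
      refine Finset.sum_congr rfl fun b _ => ?_
      have : ∀ p : Fin (d+1), c (p:ℕ) * (β (τ b) *
          ((if p = Fin.succ b then (1:ℝ) else 0)
            - (if p = Fin.castSucc b then (1:ℝ) else 0)))
          = β (τ b) * ((if p = Fin.succ b then c (p:ℕ) else 0)
            - (if p = Fin.castSucc b then c (p:ℕ) else 0)) := by
        intro p; split_ifs <;> ring
      rw [Finset.sum_congr rfl fun p _ => this p, ← Finset.mul_sum]
      congr 1
      rw [Finset.sum_sub_distrib, Finset.sum_ite_eq' Finset.univ (Fin.succ b)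
        (fun p : Fin (d+1) => c (p:ℕ)), Finset.sum_ite_eq' Finset.univ (Fin.castSucc b)
        (fun p : Fin (d+1) => c (p:ℕ))]
      simp [Fin.val_succ]
    have hterm : ∀ p : Fin (d+1), c (p:ℕ) * (M * α p + N * ∑ b : Fin d, β (τ b) *
          ((if p = Fin.succ b then (1:ℝ) else 0)
            - (if p = Fin.castSucc b then (1:ℝ) else 0)))
        = M * (c (p:ℕ) * α p) + N * (c (p:ℕ) * ∑ b : Fin d, β (τ b) *
          ((if p = Fin.succ b then (1:ℝ) else 0)
            - (if p = Fin.castSucc b then (1:ℝ) else 0))) := fun p => by ring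
    rw [Finset.sum_congr rfl fun p _ => hterm p, Finset.sum_add_distrib,
      ← Finset.mul_sum, ← Finset.mul_sum, hswap]
  rw [hsplit2, hαsum, ← hβsum]
  congr 2
  rw [Finset.sum_congr rfl fun b (_ : b ∈ Finset.univ) => by rw [hdiff b]]
  rw [Finset.sum_congr rfl fun b (_ : b ∈ Finset.univ) => (mul_ite _ _ _ _ : β (τ b) * _ = _)]
  simp [Finset.sum_ite_mem]
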